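/- Let n ≥ 1 and let V_i^{(k)} be the Benenti potentials. For every λ = (λ_1,…,λ_n) ∈ ℝ^n, every r ∈ {1,…,n}, and every k ∈ ℤ (where for k < 0 one assumes all λ_i ≠ 0, so that q_n(λ) ≠ 0), one has ∑_{i=1}^n V_i^{(k)}(q(λ)) · λ_r^{n−i} = λ_r^k, where q(λ) = (q_1(λ),…,q_n(λ)) are the Viète polynomials. -/

import Mathlib

noncomputable section

/-- Viète polynomial `q_i(λ) = (-1)^i e_i(λ)`; by convention `q_0 = 1` and `q_i = 0` for `i > n`. -/
def viete {n : ℕ} (i : ℕ) (lam : Fin n → ℝ) : ℝ :=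
  (-1 : ℝ) ^ i * ∑ s ∈ Finset.powersetCard i (Finset.univ : Finset (Fin n)), ∏ j ∈ s, lam j

/-- The partial derivative `∂q_i/∂λ_j` of the `i`-th Viète polynomial. -/
def vieteD {n : ℕ} (i : ℕ) (lam : Fin n → ℝ) (j : Fin n) : ℝ :=
  fderiv ℝ (viete i) lam (Pi.single j 1)

/-- `Δ_j(λ) = ∏_{s ≠ j} (λ_j - λ_s)`. -/
def Delta {n : ℕ} (lam : Fin n → ℝ) (j : Fin n) : ℝ :=
  ∏ s ∈ Finset.univ.erase j, (lam j - lam s)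

/-- Benenti potentials `V_i^{(k)}` for `k ≥ 0`: `Vpos n q k i = V_i^{(k)}(q)` (`i` 1-based),
with `V_i^{(0)} = δ_{i n}` and `V_i^{(k+1)} = V_{i+1}^{(k)} - q_i V_1^{(k)}`, `V_{n+1}^{(k)} := 0`. -/
def Vpos (n : ℕ) (q : ℕ → ℝ) : ℕ → ℕ → ℝ
  | 0, i => if i = n then 1 else 0
  | k + 1, i => (if i = n then 0 else Vpos n q k (i + 1)) - q i * Vpos n q k 1

/-- Benenti potentials for negative superscripts: `Vneg n q j r = V_r^{(-j)}(q)`, via the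
backward recursion `V_r^{(k)} = V_{r-1}^{(k+1)} - (q_{r-1}/q_n) V_n^{(k+1)}`, with
`V_0 := 0` and `q_0 := 1`. -/
def Vneg (n : ℕ) (q : ℕ → ℝ) : ℕ → ℕ → ℝ
  | 0, r => if r = n then 1 else 0
  | j + 1, r =>
      (if r = 1 then 0 else Vneg n q j (r - 1)) -
        (if r = 1 then 1 else q (r - 1)) / q n * Vneg n q j n

/-- Benenti potential `V_i^{(k)}(q)` for `k : ℤ`, `i` 1-based. -/
def benenti (n : ℕ) (q : ℕ → ℝ) (k : ℤ) (i : ℕ) : ℝ :=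
  if 0 ≤ k then Vpos n q k.toNat i else Vneg n q (-k).toNat i

namespace BenentiAux

open Finset Polynomial

lemma viete_zero {n : ℕ} (lam : Fin n → ℝ) : viete 0 lam = 1 := by
  simp [viete]

lemma viete_top {n : ℕ} (lam : Fin n → ℝ) : viete n lam = (-1 : ℝ) ^ n * ∏ j, lam j := by
  have h : (Finset.univ : Finset (Fin n)).powersetCard n = {Finset.univ} := by
    simpa using Finset.powersetCard_self (Finset.univ : Finset (Fin n))
  simp [viete, h]

lemma viete_top_ne {n : ℕ} (lam : Fin n → ℝ) (h : ∀ i, lam i ≠ 0) : viete n lam ≠ 0 := by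
  rw [viete_top]
  refine mul_ne_zero (pow_ne_zero _ (by norm_num)) ?_
  exact Finset.prod_ne_zero_iff.2 fun i _ => h i

/-- Evaluation of the "characteristic polynomial" at a root. -/
lemma viete_eval {n : ℕ} (lam : Fin n → ℝ) (r : Fin n) :
    ∑ i ∈ Finset.range (n + 1), viete i lam * lam r ^ (n - i) = 0 := by
  have h := congrArg (Polynomial.eval (lam r))
    (Multiset.prod_X_sub_X_eq_sum_esymm (Multiset.map lam Finset.univ.val))
  have hprod : (Multiset.map (fun j => lam r - lam j) (Finset.univ.val : Multiset (Fin n))).prod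
      = ∏ j, (lam r - lam j) := rfl
  simp only [Multiset.map_map, Function.comp_apply, Polynomial.eval_multiset_prod,
    Polynomial.eval_finset_sum, eval_mul, eval_pow, eval_neg, eval_one, eval_C, eval_X, eval_sub,
    Multiset.card_map, Finset.card_val, Finset.card_univ, Fintype.card_fin,
    Finset.esymm_map_val] at h
  rw [hprod] at h
  have hz : ∏ j, (lam r - lam j) = 0 :=
    Finset.prod_eq_zero (Finset.mem_univ r) (by simp)
  rw [hz] at h
  calc ∑ i ∈ Finset.range (n + 1), viete i lam * lam r ^ (n - i)
      = ∑ i ∈ Finset.range (n + 1),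
          (-1 : ℝ) ^ i * ((∑ t ∈ Finset.powersetCard i Finset.univ, t.prod lam)
            * lam r ^ (n - i)) := by
        apply Finset.sum_congr rfl
        intro i _
        simp only [viete]
        ring
    _ = 0 := h.symm

lemma viete_eval_shift {m : ℕ} (lam : Fin (m + 1) → ℝ) (r : Fin (m + 1)) :
    ∑ i ∈ Finset.range (m + 1), viete (i + 1) lam * lam r ^ (m - i) = -lam r ^ (m + 1) := by
  have h := viete_eval lam r
  rw [Finset.sum_range_succ'] at h
  have h0 : viete 0 lam * lam r ^ (m + 1 - 0) = lam r ^ (m + 1) := by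
    simp [viete_zero]
  rw [h0] at h
  have : ∑ i ∈ Finset.range (m + 1), viete (i + 1) lam * lam r ^ (m + 1 - (i + 1))
      = ∑ i ∈ Finset.range (m + 1), viete (i + 1) lam * lam r ^ (m - i) := by
    apply Finset.sum_congr rfl
    intro i _
    have he : m + 1 - (i + 1) = m - i := by omega
    rw [he]
  rw [this] at h
  linarith

lemma viete_eval_low {m : ℕ} (lam : Fin (m + 1) → ℝ) (r : Fin (m + 1)) :
    lam r * ∑ i ∈ Finset.range (m + 1), viete i lam * lam r ^ (m - i)
      = -viete (m + 1) lam := by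
  have h := viete_eval lam r
  rw [Finset.sum_range_succ] at h
  have hlast : viete (m + 1) lam * lam r ^ (m + 1 - (m + 1)) = viete (m + 1) lam := by simp
  rw [hlast] at h
  have : lam r * ∑ i ∈ Finset.range (m + 1), viete i lam * lam r ^ (m - i)
      = ∑ i ∈ Finset.range (m + 1), viete i lam * lam r ^ (m + 1 - i) := by
    rw [Finset.mul_sum]
    apply Finset.sum_congr rfl
    intro i hi
    rw [Finset.mem_range] at hi
    have : m + 1 - i = (m - i) + 1 := by omega
    rw [this, pow_succ']
    ring
  rw [this]
  linarith

lemma pos_identity {m : ℕ} (lam : Fin (m + 1) → ℝ) (r : Fin (m + 1)) (k : ℕ) :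
    ∑ i ∈ Finset.range (m + 1),
        Vpos (m + 1) (fun a => viete a lam) k (i + 1) * lam r ^ (m - i) = lam r ^ k := by
  set q : ℕ → ℝ := fun a => viete a lam with hq
  set x : ℝ := lam r with hx
  induction k with
  | zero =>
      rw [Finset.sum_eq_single m]
      · simp [Vpos]
      · intro b hb hbne
        have : ¬ (b + 1 = m + 1) := by omega
        simp [Vpos, this, hbne]
      · intro h; exact absurd (Finset.self_mem_range_succ m) h
  | succ k ih =>
      have hunfold : ∀ i, Vpos (m + 1) q (k + 1) (i + 1)
          = (if i + 1 = m + 1 then 0 else Vpos (m + 1) q k (i + 2)) - q (i + 1) * Vpos (m + 1) q k 1 := by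
        intro i; rfl
      have hsplit : ∑ i ∈ Finset.range (m + 1), Vpos (m + 1) q (k + 1) (i + 1) * x ^ (m - i)
          = (∑ i ∈ Finset.range (m + 1),
              (if i + 1 = m + 1 then 0 else Vpos (m + 1) q k (i + 2)) * x ^ (m - i))
            - Vpos (m + 1) q k 1 * ∑ i ∈ Finset.range (m + 1), q (i + 1) * x ^ (m - i) := by
        rw [Finset.mul_sum, ← Finset.sum_sub_distrib]
        apply Finset.sum_congr rfl
        intro i _
        rw [hunfold i]; ring
      rw [hsplit]
      have hsecond : ∑ i ∈ Finset.range (m + 1), q (i + 1) * x ^ (m - i) = -x ^ (m + 1) :=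
        viete_eval_shift lam r
      -- first sum
      have hfirst : ∑ i ∈ Finset.range (m + 1),
          (if i + 1 = m + 1 then 0 else Vpos (m + 1) q k (i + 2)) * x ^ (m - i)
          = ∑ i ∈ Finset.range m, Vpos (m + 1) q k (i + 2) * x ^ (m - i) := by
        rw [Finset.sum_range_succ]
        have h1 : (if m + 1 = m + 1 then (0:ℝ) else Vpos (m + 1) q k (m + 2)) = 0 := if_pos rfl
        rw [h1, zero_mul, add_zero]
        apply Finset.sum_congr rfl
        intro i hi
        rw [Finset.mem_range] at hi
        rw [if_neg (by omega : ¬(i + 1 = m + 1))]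
      rw [hfirst, hsecond]
      -- relate to ih
      have hih : ∑ i ∈ Finset.range m, Vpos (m + 1) q k (i + 2) * x ^ (m - (i + 1))
            + Vpos (m + 1) q k 1 * x ^ m = x ^ k := by
        rw [← ih, Finset.sum_range_succ']
        simp
      have hxmul : ∑ i ∈ Finset.range m, Vpos (m + 1) q k (i + 2) * x ^ (m - i)
          = x * ∑ i ∈ Finset.range m, Vpos (m + 1) q k (i + 2) * x ^ (m - (i + 1)) := by
        rw [Finset.mul_sum]
        apply Finset.sum_congr rfl
        intro i hi
        rw [Finset.mem_range] at hi
        have : m - i = (m - (i + 1)) + 1 := by omega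
        rw [this, pow_succ']
        ring
      rw [hxmul]
      have : x * ∑ i ∈ Finset.range m, Vpos (m + 1) q k (i + 2) * x ^ (m - (i + 1))
          = x * (x ^ k - Vpos (m + 1) q k 1 * x ^ m) := by
        congr 1; linarith
      rw [this, pow_succ]
      ring

lemma neg_identity {m : ℕ} (lam : Fin (m + 1) → ℝ) (hlam : ∀ i, lam i ≠ 0) (r : Fin (m + 1))
    (j : ℕ) :
    ∑ i ∈ Finset.range (m + 1),
        Vneg (m + 1) (fun a => viete a lam) j (i + 1) * lam r ^ (m - i) = (lam r)⁻¹ ^ j := by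
  set q : ℕ → ℝ := fun a => viete a lam with hq
  set x : ℝ := lam r with hx
  have hxne : x ≠ 0 := hlam r
  have hqn : q (m + 1) ≠ 0 := viete_top_ne lam hlam
  induction j with
  | zero =>
      rw [Finset.sum_eq_single m]
      · simp [Vneg]
      · intro b hb hbne
        have : ¬ (b + 1 = m + 1) := by omega
        simp [Vneg, this, hbne]
      · intro h; exact absurd (Finset.self_mem_range_succ m) h
  | succ j ih =>
      have hunfold : ∀ i, Vneg (m + 1) q (j + 1) (i + 1)
          = (if i = 0 then 0 else Vneg (m + 1) q j i)
            - q i / q (m + 1) * Vneg (m + 1) q j (m + 1) := by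
        intro i
        show (if i + 1 = 1 then 0 else Vneg (m + 1) q j (i + 1 - 1)) -
            (if i + 1 = 1 then 1 else q (i + 1 - 1)) / q (m + 1) * Vneg (m + 1) q j (m + 1) = _
        rcases Nat.eq_zero_or_pos i with h0 | h0
        · subst h0
          simp [hq, viete_zero]
        · have h1 : ¬ (i + 1 = 1) := by omega
          have h2 : ¬ (i = 0) := by omega
          simp [h1, h2]
      have hsplit : ∑ i ∈ Finset.range (m + 1), Vneg (m + 1) q (j + 1) (i + 1) * x ^ (m - i)
          = (∑ i ∈ Finset.range (m + 1), (if i = 0 then 0 else Vneg (m + 1) q j i) * x ^ (m - i))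
            - Vneg (m + 1) q j (m + 1) / q (m + 1)
              * ∑ i ∈ Finset.range (m + 1), q i * x ^ (m - i) := by
        rw [Finset.mul_sum, ← Finset.sum_sub_distrib]
        apply Finset.sum_congr rfl
        intro i _
        rw [hunfold i]; ring
      rw [hsplit]
      have hsecond : ∑ i ∈ Finset.range (m + 1), q i * x ^ (m - i) = -q (m + 1) * x⁻¹ := by
        have h := viete_eval_low lam r
        simp only [hq, hx]
        field_simp
        have hl : lam r ≠ 0 := hlam r
        field_simp
        linarith [h]
      have hfirst : ∑ i ∈ Finset.range (m + 1), (if i = 0 then 0 else Vneg (m + 1) q j i) * x ^ (m - i)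
          = ∑ i ∈ Finset.range m, Vneg (m + 1) q j (i + 1) * x ^ (m - (i + 1)) := by
        rw [Finset.sum_range_succ']
        have h1 : (if (0:ℕ) = 0 then (0:ℝ) else Vneg (m + 1) q j 0) = 0 := if_pos rfl
        rw [h1, zero_mul, add_zero]
        apply Finset.sum_congr rfl
        intro i _
        rw [if_neg (by omega : ¬(i + 1 = 0))]
      rw [hfirst, hsecond]
      -- relate to ih
      have hih : x * ∑ i ∈ Finset.range m, Vneg (m + 1) q j (i + 1) * x ^ (m - (i + 1))
            + Vneg (m + 1) q j (m + 1) = x⁻¹ ^ j := by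
        rw [← ih, Finset.sum_range_succ, Finset.mul_sum]
        have hlast : Vneg (m + 1) q j (m + 1) * x ^ (m - m) = Vneg (m + 1) q j (m + 1) := by simp
        rw [hlast]
        congr 1
        apply Finset.sum_congr rfl
        intro i hi
        rw [Finset.mem_range] at hi
        have : m - i = (m - (i + 1)) + 1 := by omega
        rw [this, pow_succ']
        ring
      have hG : ∑ i ∈ Finset.range m, Vneg (m + 1) q j (i + 1) * x ^ (m - (i + 1))
          = x⁻¹ * (x⁻¹ ^ j - Vneg (m + 1) q j (m + 1)) := by
        apply mul_left_cancel₀ hxne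
        rw [← mul_assoc, mul_inv_cancel₀ hxne, one_mul]
        linarith [hih]
      rw [hG, pow_succ]
      field_simp
      ring

end BenentiAux

theorem benenti_generating_identity (n : ℕ) (hn : 1 ≤ n) (lam : Fin n → ℝ) (k : ℤ)
    (hneg : k < 0 → ∀ i, lam i ≠ 0) (r : Fin n) :
    (∑ i ∈ Finset.Icc 1 n, benenti n (fun a => viete a lam) k i * lam r ^ (n - i)) =
      lam r ^ k := by
  obtain ⟨m, rfl⟩ : ∃ m, n = m + 1 := ⟨n - 1, by omega⟩
  have hIcc : ∀ f : ℕ → ℝ,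
      ∑ i ∈ Finset.Icc 1 (m + 1), f i = ∑ i ∈ Finset.range (m + 1), f (i + 1) := by
    intro f
    rw [← Finset.Ico_add_one_right_eq_Icc, Finset.sum_Ico_eq_sum_range]
    simp [add_comm]
  rw [hIcc]
  rcases le_or_gt 0 k with hk | hk
  · have hb : ∀ i, benenti (m + 1) (fun a => viete a lam) k i
        = Vpos (m + 1) (fun a => viete a lam) k.toNat i := by
      intro i; simp [benenti, hk]
    simp only [hb]
    have := BenentiAux.pos_identity lam r k.toNat
    have hexp : ∀ i : ℕ, m + 1 - (i + 1) = m - i := fun i => by omega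
    simp only [hexp]
    rw [this, ← zpow_natCast, Int.toNat_of_nonneg hk]
  · have hb : ∀ i, benenti (m + 1) (fun a => viete a lam) k i
        = Vneg (m + 1) (fun a => viete a lam) (-k).toNat i := by
      intro i; simp [benenti, not_le.2 hk]
    simp only [hb]
    have := BenentiAux.neg_identity lam (hneg hk) r (-k).toNat
    have hexp : ∀ i : ℕ, m + 1 - (i + 1) = m - i := fun i => by omega
    simp only [hexp]
    rw [this, ← zpow_natCast, Int.toNat_of_nonneg (by omega : (0:ℤ) ≤ -k), inv_zpow, ← zpow_neg,
      neg_neg]
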